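/- Let Cₙ (n ≥ 3) be the cycle graph with vertices v₁, …, vₙ, indices taken modulo n, where vᵢ is adjacent to vᵢ₊₁. If n is even, then 𝒩(Cₙ) = { {v_{i+1}, …, v_{i+n/2}} : 1 ≤ i ≤ n }, and if n is odd, then 𝒩(Cₙ) = { {v_{i+1}, …, v_{i+(n+1)/2}} : 1 ≤ i ≤ n }; that is, the maximal nongenerating sets of Cₙ are exactly the sets of ⌈n/2⌉ consecutive vertices. -/

import Mathlib

open SimpleGraph

variable {V : Type*}

/-- `w` lies on a geodesic (shortest path) between `u` and `v` in `G`. -/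
def OnGeodesic (G : SimpleGraph V) (u v w : V) : Prop :=
  ∃ p : G.Walk u v, p.IsPath ∧ p.length = G.dist u v ∧ w ∈ p.support

/-- A set of vertices is geodetically convex if it contains every vertex lying on a
geodesic between two of its elements. -/
def GeoConvex (G : SimpleGraph V) (S : Set V) : Prop :=
  ∀ ⦃u⦄, u ∈ S → ∀ ⦃v⦄, v ∈ S → ∀ ⦃w⦄, OnGeodesic G u v w → w ∈ S

/-- The geodetic convex hull of a set of vertices: the smallest geodetically convex
set containing it. -/
def geoHull (G : SimpleGraph V) (S : Set V) : Set V :=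
  ⋂₀ {K : Set V | S ⊆ K ∧ GeoConvex G K}

/-- A set of vertices is generating if its convex hull is the whole vertex set. -/
def GeoGenerates (G : SimpleGraph V) (S : Set V) : Prop :=
  geoHull G S = Set.univ

/-- A maximal nongenerating set: a nongenerating set not properly contained in any
nongenerating set.  The family of these is `𝒩(G)`. -/
def MaxNongen (G : SimpleGraph V) (N : Set V) : Prop :=
  ¬ GeoGenerates G N ∧ ∀ M : Set V, ¬ GeoGenerates G M → N ⊆ M → N = M

/-- The Frattini subset `Φ(G)`: the intersection of all maximal nongenerating sets. -/
def geoFrattini (G : SimpleGraph V) : Set V :=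
  ⋂₀ {N : Set V | MaxNongen G N}

/-- A vertex is simplicial if its neighbors induce a complete graph. -/
def Simplicial (G : SimpleGraph V) (v : V) : Prop :=
  ∀ ⦃u w : V⦄, G.Adj v u → G.Adj v w → u ≠ w → G.Adj u w

/-- A minimal generating set: a generating set no proper subset of which generates.
The family of these is `𝒢(G)`. -/
def MinGen (G : SimpleGraph V) (L : Set V) : Prop :=
  GeoGenerates G L ∧ ∀ M : Set V, GeoGenerates G M → M ⊆ L → M = L

/- ## Auxiliary material for the cycle graph -/

namespace CycleAux

open scoped Fin.NatCast Fin.CommRing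

/- ### Hull basics -/

lemma subset_geoHull (G : SimpleGraph V) (S : Set V) : S ⊆ geoHull G S :=
  fun x hx K hK => hK.1 hx

lemma geoHull_convex (G : SimpleGraph V) (S : Set V) : GeoConvex G (geoHull G S) := by
  intro u hu v hv w hw K hK
  exact hK.2 (hu K hK) (hv K hK) hw

lemma geoHull_subset {G : SimpleGraph V} {S K : Set V} (hSK : S ⊆ K) (hK : GeoConvex G K) :
    geoHull G S ⊆ K :=
  Set.sInter_subset_of_mem ⟨hSK, hK⟩

/- ### `Fin` arithmetic -/

variable {n : ℕ} [NeZero n]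

lemma sub_val (a b : Fin n) :
    (a - b).val = if b.val ≤ a.val then a.val - b.val else n + a.val - b.val := by
  have hn : 0 < n := Nat.pos_of_ne_zero (NeZero.ne n)
  have ha := a.isLt; have hb := b.isLt
  rw [Fin.sub_def]
  simp only
  split
  · next h =>
    have e : n - b.val + a.val = n + (a.val - b.val) := by omega
    rw [e, Nat.add_mod_left, Nat.mod_eq_of_lt (by omega)]
  · next h =>
    rw [Nat.mod_eq_of_lt (by omega)]
    omega

lemma sub_val_pair (a b : Fin n) :
    (b - a).val + (a - b).val = n ∨ ((b - a).val = 0 ∧ (a - b).val = 0) := by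
  rw [sub_val, sub_val]
  rcases Nat.lt_trichotomy a.val b.val with h | h | h
  · left; rw [if_pos (le_of_lt h), if_neg (not_le.2 h)]; omega
  · right; rw [if_pos (le_of_eq h.symm), if_pos (le_of_eq h)]; omega
  · left; rw [if_neg (not_le.2 h), if_pos (le_of_lt h)]; omega

lemma val_one' (hn : 3 ≤ n) : ((1 : Fin n)).val = 1 := by
  rw [show (1 : Fin n) = ((1 : ℕ) : Fin n) by norm_cast, Fin.val_natCast,
    Nat.mod_eq_of_lt (by omega)]

lemma add_val (a b : Fin n) : (a + b).val = (a.val + b.val) % n := by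
  rw [Fin.add_def]

lemma sum_val_cases (a b c : Fin n) (h : c = a + b) :
    c.val = a.val + b.val ∨ c.val + n = a.val + b.val := by
  have hn : 0 < n := Nat.pos_of_ne_zero (NeZero.ne n)
  have e := add_val a b
  rw [h, e]
  have ha := a.isLt; have hb := b.isLt
  rcases Nat.lt_or_ge (a.val + b.val) n with h' | h'
  · left; rw [Nat.mod_eq_of_lt h']
  · right
    have e2 : a.val + b.val = n + (a.val + b.val - n) := by omega
    rw [e2, Nat.add_mod_left, Nat.mod_eq_of_lt (by omega)]
    omega

/- ### Walks along the cycle -/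

lemma adj_succ (hn : 3 ≤ n) (a : Fin n) : (cycleGraph n).Adj a (a + 1) := by
  rw [cycleGraph_adj']
  right
  rw [show a + 1 - a = 1 by ring, val_one' hn]

def plusWalk (hn : 3 ≤ n) (a : Fin n) : (m : ℕ) → (cycleGraph n).Walk a (a + (m : Fin n))
  | 0 => Walk.nil.copy rfl (by simp)
  | m + 1 =>
      (Walk.cons (adj_succ hn a) (plusWalk hn (a + 1) m)).copy rfl
        (by push_cast; ring)

lemma plusWalk_length (hn : 3 ≤ n) (a : Fin n) (m : ℕ) :
    (plusWalk hn a m).length = m := by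
  induction m generalizing a with
  | zero => simp [plusWalk]
  | succ m ih => simp [plusWalk, ih]

lemma plusWalk_support (hn : 3 ≤ n) (a : Fin n) (m : ℕ) (x : Fin n) :
    x ∈ (plusWalk hn a m).support ↔ ∃ j : ℕ, j ≤ m ∧ x = a + (j : Fin n) := by
  induction m generalizing a with
  | zero =>
    simp only [plusWalk, Walk.support_copy, Walk.support_nil, List.mem_singleton]
    constructor
    · rintro rfl; exact ⟨0, le_refl _, by simp⟩
    · rintro ⟨j, hj, rfl⟩
      interval_cases j
      simp
  | succ m ih =>
    simp only [plusWalk, Walk.support_copy, Walk.support_cons, List.mem_cons]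
    rw [ih]
    constructor
    · rintro (rfl | ⟨j, hj, rfl⟩)
      · exact ⟨0, by omega, by simp⟩
      · exact ⟨j + 1, by omega, by push_cast; ring⟩
    · rintro ⟨j, hj, rfl⟩
      rcases Nat.eq_zero_or_pos j with rfl | hj0
      · left; simp
      · right; refine ⟨j - 1, by omega, ?_⟩
        have e : (j : ℕ) = (j - 1) + 1 := by omega
        rw [e]; push_cast; ring

lemma plusWalk_isPath (hn : 3 ≤ n) (a : Fin n) (m : ℕ) (hm : m < n) :
    (plusWalk hn a m).IsPath := by
  induction m generalizing a with
  | zero => simp [plusWalk]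
  | succ m ih =>
    simp only [plusWalk, Walk.isPath_copy]
    rw [Walk.cons_isPath_iff]
    refine ⟨ih _ (by omega), ?_⟩
    rw [plusWalk_support]
    rintro ⟨j, hj, hx⟩
    have e : a + 1 + (j : Fin n) = a + ((j + 1 : ℕ) : Fin n) := by push_cast; ring
    rw [e] at hx
    have hz : (((j : ℕ) + 1 : ℕ) : Fin n) = 0 :=
      add_left_cancel (hx.symm.trans (add_zero a).symm)
    have := congrArg Fin.val hz
    rw [Fin.val_natCast, Fin.val_zero, Nat.mod_eq_of_lt (by omega)] at this
    omega

/- ### Distance in the cycle -/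

lemma add_sub_val' (a b : Fin n) : a + (((b - a).val : ℕ) : Fin n) = b := by
  rw [Fin.cast_val_eq_self]
  ring

lemma reachable (hn : 3 ≤ n) (a b : Fin n) : (cycleGraph n).Reachable a b :=
  ⟨(plusWalk hn a ((b - a).val)).copy rfl (add_sub_val' _ _)⟩

lemma dist_le_sub (hn : 3 ≤ n) (a b : Fin n) :
    (cycleGraph n).dist a b ≤ (b - a).val := by
  have h := SimpleGraph.dist_le
    ((plusWalk hn a ((b - a).val)).copy rfl (add_sub_val' _ _))
  rwa [Walk.length_copy, plusWalk_length] at h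

lemma walk_length_lower (hn : 3 ≤ n) {a b : Fin n} (p : (cycleGraph n).Walk a b) :
    min (b - a).val (a - b).val ≤ p.length := by
  induction p with
  | nil => simp
  | @cons a c b h q ih =>
    rw [cycleGraph_adj'] at h
    have hpair1 := sub_val_pair c b
    have hpair2 := sub_val_pair a b
    have i1 := (b - c).isLt; have i2 := (c - b).isLt
    have i3 := (b - a).isLt; have i4 := (a - b).isLt
    rw [Walk.length_cons]
    rcases h with h1 | h1
    · have e : a - b = (a - c) + (c - b) := by ring
      have hs := sum_val_cases (a - c) (c - b) (a - b) e
      rw [h1] at hs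
      omega
    · have e : b - a = (b - c) + (c - a) := by ring
      have hs := sum_val_cases (b - c) (c - a) (b - a) e
      rw [h1] at hs
      omega

lemma cycle_dist (hn : 3 ≤ n) (a b : Fin n) :
    (cycleGraph n).dist a b = min (b - a).val (a - b).val := by
  apply le_antisymm
  · refine le_min (dist_le_sub hn a b) ?_
    rw [SimpleGraph.dist_comm]
    exact dist_le_sub hn b a
  · obtain ⟨p, hp⟩ := (reachable hn a b).exists_walk_length_eq_dist
    rw [← hp]
    exact walk_length_lower hn p

lemma orient (hn : 3 ≤ n) {α α' β β' γ γ' : ℕ}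
    (hα : α < n) (hα' : α' < n) (hβ : β < n) (hβ' : β' < n) (hγ : γ < n) (hγ' : γ' < n)
    (h1 : α + α' = n ∨ (α = 0 ∧ α' = 0))
    (h2 : β + β' = n ∨ (β = 0 ∧ β' = 0))
    (h3 : γ + γ' = n ∨ (γ = 0 ∧ γ' = 0))
    (h4 : γ = α + β ∨ γ + n = α + β)
    (h5 : min α α' + min β β' = min γ γ') :
    (α + β = γ ∧ γ ≤ γ') ∨ (α' + β' = γ' ∧ γ' ≤ γ) := by omega

/- ### Geodesics in the cycle -/

lemma onGeodesic_iff (hn : 3 ≤ n) (u v w : Fin n) :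
    OnGeodesic (cycleGraph n) u v w ↔
      min (w - u).val (u - w).val + min (v - w).val (w - v).val
        = min (v - u).val (u - v).val := by
  rw [show min (w - u).val (u - w).val = (cycleGraph n).dist u w from (cycle_dist hn u w).symm,
    show min (v - w).val (w - v).val = (cycleGraph n).dist w v from (cycle_dist hn w v).symm,
    show min (v - u).val (u - v).val = (cycleGraph n).dist u v from (cycle_dist hn u v).symm]
  constructor
  · rintro ⟨p, hpath, hlen, hw⟩
    have h1 : (cycleGraph n).dist u w ≤ (p.takeUntil w hw).length := SimpleGraph.dist_le _
    have h2 : (cycleGraph n).dist w v ≤ (p.dropUntil w hw).length := SimpleGraph.dist_le _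
    have h3 : (p.takeUntil w hw).length + (p.dropUntil w hw).length = p.length := by
      rw [← Walk.length_append, Walk.take_spec]
    have h4 : (cycleGraph n).dist u v ≤ (cycleGraph n).dist u w + (cycleGraph n).dist w v := by
      obtain ⟨q, hq⟩ := (reachable hn u w).exists_walk_length_eq_dist
      obtain ⟨r, hr⟩ := (reachable hn w v).exists_walk_length_eq_dist
      have := SimpleGraph.dist_le (q.append r)
      rwa [Walk.length_append, hq, hr] at this
    omega
  · intro h
    rw [cycle_dist hn, cycle_dist hn, cycle_dist hn] at h
    have h1 := sub_val_pair u w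
    have h2 := sub_val_pair w v
    have h3 := sub_val_pair u v
    have h4 := sum_val_cases (w - u) (v - w) (v - u) (by ring)
    have key := orient hn (w - u).isLt (u - w).isLt (v - w).isLt (w - v).isLt
      (v - u).isLt (u - v).isLt (by omega) (by omega) (by omega) h4 h
    rcases key with ⟨hsum, hle⟩ | ⟨hsum, hle⟩
    · refine ⟨(plusWalk hn u ((v - u).val)).copy rfl (add_sub_val' _ _),
        ?_, ?_, ?_⟩
      · rw [Walk.isPath_copy]
        exact plusWalk_isPath hn _ _ (v - u).isLt
      · rw [Walk.length_copy, plusWalk_length, cycle_dist hn]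
        omega
      · rw [Walk.support_copy, plusWalk_support]
        exact ⟨(w - u).val, by omega, (add_sub_val' u w).symm⟩
    · refine ⟨((plusWalk hn v ((u - v).val)).copy rfl
        (add_sub_val' _ _)).reverse, ?_, ?_, ?_⟩
      · apply Walk.IsPath.reverse
        rw [Walk.isPath_copy]
        exact plusWalk_isPath hn _ _ (u - v).isLt
      · rw [Walk.length_reverse, Walk.length_copy, plusWalk_length, cycle_dist hn]
        omega
      · rw [Walk.support_reverse, List.mem_reverse, Walk.support_copy, plusWalk_support]
        exact ⟨(w - v).val, by omega, (add_sub_val' v w).symm⟩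

/- ### Arcs of consecutive vertices -/

def arc (i : Fin n) : Set (Fin n) :=
  {x : Fin n | ∃ j : Fin n, 1 ≤ (j : ℕ) ∧ (j : ℕ) ≤ (n + 1) / 2 ∧ x = i + j}

lemma mem_arc (i x : Fin n) :
    x ∈ arc i ↔ 1 ≤ (x - i).val ∧ (x - i).val ≤ (n + 1) / 2 := by
  constructor
  · rintro ⟨j, h1, h2, rfl⟩
    rw [show i + j - i = j by ring]
    exact ⟨h1, h2⟩
  · rintro ⟨h1, h2⟩
    exact ⟨x - i, h1, h2, by ring⟩

lemma sub_val_base (i a b : Fin n) :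
    (a - b).val = if (b - i).val ≤ (a - i).val then (a - i).val - (b - i).val
      else n + (a - i).val - (b - i).val := by
  rw [show a - b = (a - i) - (b - i) by ring, sub_val]

lemma convex_arc (hn : 3 ≤ n) (i : Fin n) : GeoConvex (cycleGraph n) (arc i) := by
  intro u hu v hv w hw
  rw [mem_arc] at hu hv ⊢
  rw [onGeodesic_iff hn] at hw
  have e1 := sub_val_base i w u
  have e2 := sub_val_base i u w
  have e3 := sub_val_base i v w
  have e4 := sub_val_base i w v
  have e5 := sub_val_base i v u
  have e6 := sub_val_base i u v
  have b1 := (u - i).isLt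
  have b2 := (v - i).isLt
  have b3 := (w - i).isLt
  rw [e1, e2, e3, e4, e5, e6] at hw
  split_ifs at hw <;> omega

lemma not_mem_arc_self (hn : 3 ≤ n) (i : Fin n) : i ∉ arc i := by
  rw [mem_arc, show i - i = 0 by ring]
  simp

lemma nongen_arc (hn : 3 ≤ n) (i : Fin n) : ¬ GeoGenerates (cycleGraph n) (arc i) := by
  intro h
  have h' : geoHull (cycleGraph n) (arc i) = Set.univ := h
  have hsub := geoHull_subset (le_refl (arc i)) (convex_arc hn i)
  rw [h'] at hsub
  exact not_mem_arc_self hn i (hsub (Set.mem_univ i))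

lemma arc_subset_inj (hn : 3 ≤ n) {i j : Fin n} (h : arc i ⊆ arc j) : i = j := by
  have hk1 : 1 ≤ (n + 1) / 2 := by omega
  have hkn : (n + 1) / 2 < n := by omega
  have m1 : i + 1 ∈ arc i := by
    rw [mem_arc, show i + 1 - i = 1 by ring, val_one' hn]
    omega
  have m2 : i + (((n + 1) / 2 : ℕ) : Fin n) ∈ arc i := by
    rw [mem_arc, show i + (((n + 1) / 2 : ℕ) : Fin n) - i = (((n + 1) / 2 : ℕ) : Fin n) by ring,
      Fin.val_natCast, Nat.mod_eq_of_lt hkn]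
    omega
  have m1' := (mem_arc j (i + 1)).mp (h m1)
  have m2' := (mem_arc j _).mp (h m2)
  have e : i + (((n + 1) / 2 : ℕ) : Fin n) - j
      = (i + 1 - j) + ((((n + 1) / 2 - 1 : ℕ)) : Fin n) := by
    rw [show ((((n + 1) / 2 : ℕ)) : Fin n) = ((((n + 1) / 2 - 1 : ℕ) + 1 : ℕ) : Fin n) by
      congr 1; omega]
    push_cast
    ring
  have hsum := sum_val_cases (i + 1 - j) ((((n + 1) / 2 - 1 : ℕ)) : Fin n) _ e
  rw [Fin.val_natCast, Nat.mod_eq_of_lt (by omega)] at hsum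
  have ht : (i + 1 - j).val = 1 := by
    have := (i + (((n + 1) / 2 : ℕ) : Fin n) - j).isLt
    omega
  have h1 : i + 1 - j = 1 := by
    apply Fin.ext
    rw [ht, val_one' hn]
  have : i - j = 0 := by linear_combination h1
  exact sub_eq_zero.mp this

lemma nongen_subset_arc (hn : 3 ≤ n) {S : Set (Fin n)}
    (h : ¬ GeoGenerates (cycleGraph n) S) : ∃ i, S ⊆ arc i := by
  rcases S.eq_empty_or_nonempty with rfl | ⟨s0, hs0⟩
  · exact ⟨0, by simp⟩
  have hS : S ⊆ geoHull (cycleGraph n) S := subset_geoHull _ _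
  have hne : geoHull (cycleGraph n) S ≠ Set.univ := h
  obtain ⟨z, hz⟩ : ∃ z, z ∉ geoHull (cycleGraph n) S := by
    by_contra hc
    push_neg at hc
    exact hne (Set.eq_univ_of_forall hc)
  have hpos : ∀ x ∈ geoHull (cycleGraph n) S, 1 ≤ (x - z).val := by
    intro x hx
    rcases Nat.eq_zero_or_pos (x - z).val with h0 | h0
    · exfalso
      have : x - z = 0 := Fin.ext (by simpa using h0)
      have : x = z := sub_eq_zero.mp this
      exact hz (this ▸ hx)
    · exact h0
  have key : ∀ u ∈ geoHull (cycleGraph n) S, ∀ v ∈ geoHull (cycleGraph n) S,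
      (u - z).val ≤ (v - z).val → 2 * ((v - z).val - (u - z).val) < n := by
    intro u hu v hv hle
    by_contra hbig
    push_neg at hbig
    apply hz
    refine geoHull_convex _ _ hu hv ?_
    rw [onGeodesic_iff hn]
    have P1 := sub_val_pair z u
    have P2 := sub_val_pair z v
    have P3 := sub_val_pair u v
    have Q := sum_val_cases (v - z) (z - u) (v - u) (by ring)
    have b1 := (u - z).isLt
    have b2 := (v - z).isLt
    have b3 := (z - u).isLt
    have b4 := (z - v).isLt
    have b5 := (v - u).isLt
    have b6 := (u - v).isLt
    have hcu := hpos u hu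
    have hcv := hpos v hv
    omega
  obtain ⟨u0, hu0H, hu0⟩ : ∃ x ∈ geoHull (cycleGraph n) S,
      (x - z).val = sInf {t : ℕ | ∃ x ∈ geoHull (cycleGraph n) S, (x - z).val = t} := by
    have hTne : {t : ℕ | ∃ x ∈ geoHull (cycleGraph n) S, (x - z).val = t}.Nonempty :=
      ⟨(s0 - z).val, s0, hS hs0, rfl⟩
    exact Nat.sInf_mem hTne
  refine ⟨u0 - 1, fun x hx => ?_⟩
  have hxH := hS hx
  rw [mem_arc]
  have hmin : (u0 - z).val ≤ (x - z).val := by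
    rw [hu0]
    exact Nat.sInf_le ⟨x, hxH, rfl⟩
  have hgap := key u0 hu0H x hxH hmin
  have e : x - (u0 - 1) = (x - u0) + 1 := by ring
  have hsum := sum_val_cases (x - u0) 1 (x - (u0 - 1)) e
  rw [val_one' hn] at hsum
  have e2 : (x - u0).val = (x - z).val - (u0 - z).val := by
    rw [show x - u0 = (x - z) - (u0 - z) by ring, sub_val, if_pos hmin]
  have b1 := (x - (u0 - 1)).isLt
  have b2 := (x - z).isLt
  have hp := hpos x hxH
  omega

end CycleAux

/-- The maximal nongenerating sets of the cycle graph `Cₙ` (`n ≥ 3`) are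
exactly the sets of `⌈n/2⌉ = (n+1)/2` consecutive vertices
`{v_{i+1}, …, v_{i+⌈n/2⌉}}`. -/
theorem maxNongen_cycleGraph_iff (n : ℕ) (hn : 3 ≤ n) (N : Set (Fin n)) :
    MaxNongen (SimpleGraph.cycleGraph n) N ↔
      ∃ i : Fin n, N = {x : Fin n |
        ∃ j : Fin n, 1 ≤ (j : ℕ) ∧ (j : ℕ) ≤ (n + 1) / 2 ∧ x = i + j} := by
  haveI : NeZero n := ⟨by omega⟩
  constructor
  · rintro ⟨hng, hmax⟩
    obtain ⟨i, hsub⟩ := CycleAux.nongen_subset_arc hn hng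
    exact ⟨i, hmax _ (CycleAux.nongen_arc hn i) hsub⟩
  · rintro ⟨i, rfl⟩
    refine ⟨CycleAux.nongen_arc hn i, fun M hM hsub => ?_⟩
    obtain ⟨j, hMj⟩ := CycleAux.nongen_subset_arc hn hM
    have hij : i = j := CycleAux.arc_subset_inj hn (Set.Subset.trans hsub hMj)
    exact Set.Subset.antisymm hsub (hij ▸ hMj)
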